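/- Let V be a finite-dimensional real vector space, 𝔤 ⊆ End(V) a linear subspace whose first prolongation vanishes (the alternation operator δ : Hom(V,𝔤) → A²(V;V) is injective), and W ⊆ A²(V;V) a subspace with A²(V;V) = δ(Hom(V,𝔤)) ⊕ W; let P : A²(V;V) → Hom(V,𝔤) be the unique linear map with T − δ(P(T)) ∈ W for all T. Fix r ≥ 0, let E be the space of multilinear maps t : V^{r+2} → V symmetric in the first r+1 arguments, and let D : E → {multilinear maps V^{r+2} → V} be the Spencer operator (Dt)(u₁,…,u_r,v,w) = t(u₁,…,u_r,v,w) − t(u₁,…,u_r,w,v). Let E_𝔤 ⊆ E be the subspace of those t of the form t(u₁,…,u_{r+1},w) = τ(u₁,…,u_{r+1})(w) for some symmetric multilinear τ : V^{r+1} → 𝔤, and define Θ on D(E) by Θ(s)(u₁,…,u_{r+1},w) = Σ_{h=1}^{r+1} P( s(u₁,…,û_h,…,u_{r+1}, ·, ·) )(u_h)(w), noting that for s ∈ D(E) each map (v,w) ↦ s(u₁,…,u_r,v,w) is alternating. Then D(E) is the internal direct sum of D(E_𝔤) and ker(Θ) ∩ D(E). -/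

import Mathlib

set_option maxHeartbeats 800000


/-- The Spencer operator `D` on multilinear maps `V^{r+2} → V` symmetric in the first `r+1`
arguments: `(Dt)(u₁,…,u_r,v,w) = t(u₁,…,u_r,v,w) − t(u₁,…,u_r,w,v)`. -/
noncomputable def spencerD {V : Type*} [AddCommGroup V] [Module ℝ V] (r : ℕ)
    (t : MultilinearMap ℝ (fun _ : Fin (r + 2) => V) V) :
    MultilinearMap ℝ (fun _ : Fin (r + 2) => V) V :=
  t - t.domDomCongr (Equiv.swap ((Fin.last r).castSucc) (Fin.last (r + 1)))

/-- Symmetry of a multilinear map `V^{r+2} → V` in its first `r+1` arguments, i.e. membership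
in the space `E`. -/
def SymFirst {V : Type*} [AddCommGroup V] [Module ℝ V] (r : ℕ)
    (t : MultilinearMap ℝ (fun _ : Fin (r + 2) => V) V) : Prop :=
  ∀ σ : Equiv.Perm (Fin (r + 2)), σ (Fin.last (r + 1)) = Fin.last (r + 1) →
    t.domDomCongr σ = t

/-- The alternating bilinear map `(v,w) ↦ s(u₁,…,u_r,v,w)` obtained by freezing the first `r`
arguments of a multilinear map `s : V^{r+2} → V`. -/
noncomputable def lastTwoCurry {V : Type*} [AddCommGroup V] [Module ℝ V] {r : ℕ}
    (s : MultilinearMap ℝ (fun _ : Fin (r + 2) => V) V) (u : Fin r → V) :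
    V →ₗ[ℝ] V →ₗ[ℝ] V :=
  s.curryRight.curryRight u

set_option linter.unusedVariables false
set_option linter.unusedSectionVars false

open Fin Function

namespace SpencerAux

def liftPerm {n : ℕ} (ρ : Equiv.Perm (Fin n)) : Equiv.Perm (Fin (n + 1)) :=
  finSuccEquivLast.trans ((Equiv.optionCongr ρ).trans finSuccEquivLast.symm)

@[simp] lemma liftPerm_castSucc {n : ℕ} (ρ : Equiv.Perm (Fin n)) (j : Fin n) :
    liftPerm ρ (castSucc j) = castSucc (ρ j) := by simp [liftPerm]

@[simp] lemma liftPerm_last {n : ℕ} (ρ : Equiv.Perm (Fin n)) :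
    liftPerm ρ (last n) = last n := by simp [liftPerm]

def rho {n : ℕ} (h : Fin (n + 1)) : Equiv.Perm (Fin (n + 1)) :=
  finSuccEquivLast.trans (finSuccEquiv' h).symm

@[simp] lemma rho_castSucc {n : ℕ} (h : Fin (n + 1)) (j : Fin n) :
    rho h (castSucc j) = h.succAbove j := by simp [rho]

@[simp] lemma rho_last {n : ℕ} (h : Fin (n + 1)) : rho h (last n) = h := by simp [rho]

variable {V : Type*} [AddCommGroup V] [Module ℝ V] {r : ℕ}

@[simp] lemma lastTwoCurry_apply (s : MultilinearMap ℝ (fun _ : Fin (r + 2) => V) V)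
    (x : Fin r → V) (v w : V) :
    lastTwoCurry s x v w = s (snoc (snoc x v) w) := rfl

lemma lastTwoCurry_apply_one (s : MultilinearMap ℝ (fun _ : Fin (r + 2) => V) V)
    (x : Fin r → V) (v : V) :
    lastTwoCurry s x v = s.curryRight (snoc x v) := rfl

lemma snoc_swap (x : Fin r → V) (v w : V) :
    (fun i => (snoc (snoc x v) w : Fin (r + 2) → V)
        (Equiv.swap ((Fin.last r).castSucc) (Fin.last (r + 1)) i))
      = snoc (snoc x w) v := by
  funext i
  refine Fin.lastCases ?_ (fun j => ?_) i
  · simp [Equiv.swap_apply_right]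
  · refine Fin.lastCases ?_ (fun k => ?_) j
    · simp [Equiv.swap_apply_left]
    · have h1 : (castSucc (castSucc k) : Fin (r + 2)) ≠ (Fin.last r).castSucc := by
        simp [Fin.castSucc_inj]
      have h2 : (castSucc (castSucc k) : Fin (r + 2)) ≠ Fin.last (r + 1) :=
        Fin.ne_last_of_lt (Fin.castSucc_lt_last _)
      simp [Equiv.swap_apply_of_ne_of_ne h1 h2]

lemma spencerD_apply (t : MultilinearMap ℝ (fun _ : Fin (r + 2) => V) V)
    (x : Fin r → V) (v w : V) :
    spencerD r t (snoc (snoc x v) w) = t (snoc (snoc x v) w) - t (snoc (snoc x w) v) := by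
  rw [spencerD, MultilinearMap.sub_apply, MultilinearMap.domDomCongr_apply, snoc_swap]

lemma lastTwoCurry_spencerD (t : MultilinearMap ℝ (fun _ : Fin (r + 2) => V) V)
    (x : Fin r → V) :
    lastTwoCurry (spencerD r t) x = lastTwoCurry t x - (lastTwoCurry t x).flip := by
  ext v w
  simp [spencerD_apply]


lemma symFirst_apply {t : MultilinearMap ℝ (fun _ : Fin (r + 2) => V) V}
    (ht : SymFirst r t) (σ : Equiv.Perm (Fin (r + 2)))
    (hσ : σ (Fin.last (r + 1)) = Fin.last (r + 1)) (m : Fin (r + 2) → V) :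
    t (fun i => m (σ i)) = t m :=
  DFunLike.congr_fun (ht σ hσ) m

/-- `t` symmetric in the first `r+1` arguments is invariant under a permutation of the
first `r` arguments, in `snoc` form. -/
lemma apply_snoc_perm {t : MultilinearMap ℝ (fun _ : Fin (r + 2) => V) V}
    (ht : SymFirst r t) (π : Equiv.Perm (Fin r)) (x : Fin r → V) (a b : V) :
    t (snoc (snoc (x ∘ π) a) b) = t (snoc (snoc x a) b) := by
  have key := symFirst_apply ht (liftPerm (liftPerm π)) (liftPerm_last _) (snoc (snoc x a) b)
  have harg : (fun i => (snoc (snoc x a) b : Fin (r + 2) → V) (liftPerm (liftPerm π) i))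
      = snoc (snoc (x ∘ π) a) b := by
    funext i
    refine Fin.lastCases ?_ (fun j => ?_) i
    · simp
    · refine Fin.lastCases ?_ (fun k => ?_) j
      · simp
      · simp [Function.comp]
  rw [harg] at key
  exact key

lemma lastTwoCurry_comp_perm {t : MultilinearMap ℝ (fun _ : Fin (r + 2) => V) V}
    (ht : SymFirst r t) (π : Equiv.Perm (Fin r)) (x : Fin r → V) :
    lastTwoCurry t (x ∘ π) = lastTwoCurry t x := by
  ext v w
  simp only [lastTwoCurry_apply]
  exact apply_snoc_perm ht π x v w

lemma key_perm {n : ℕ} (ρ : Equiv.Perm (Fin (n + 1))) (h : Fin (n + 1)) :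
    ∃ π : Equiv.Perm (Fin n), ∀ j, ρ (h.succAbove j) = (ρ h).succAbove (π j) := by
  set e : Option (Fin n) ≃ Option (Fin n) :=
    (finSuccEquiv' h).symm.trans (ρ.trans (finSuccEquiv' (ρ h))) with he
  refine ⟨e.removeNone, fun j => ?_⟩
  have hne : ρ (h.succAbove j) ≠ ρ h := fun hc => Fin.succAbove_ne h j (ρ.injective hc)
  obtain ⟨k, hk⟩ := Fin.exists_succAbove_eq hne
  have hek : e (some j) = some k := by
    simp only [he, Equiv.trans_apply, finSuccEquiv'_symm_some, ← hk, finSuccEquiv'_succAbove]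
  have := Equiv.removeNone_some e ⟨k, hek⟩
  rw [hek] at this
  have : e.removeNone j = k := Option.some_injective _ this
  rw [this, hk]

/-- Reindexing invariance of the `Θ` sum. -/
lemma theta_sum_perm (P : (V →ₗ[ℝ] V →ₗ[ℝ] V) →ₗ[ℝ] (V →ₗ[ℝ] V →ₗ[ℝ] V))
    {t : MultilinearMap ℝ (fun _ : Fin (r + 2) => V) V} (ht : SymFirst r t)
    (ρ : Equiv.Perm (Fin (r + 1))) (u : Fin (r + 1) → V) :
    ∑ h : Fin (r + 1), P (lastTwoCurry (spencerD r t) (h.removeNth (u ∘ ρ))) ((u ∘ ρ) h)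
      = ∑ h : Fin (r + 1), P (lastTwoCurry (spencerD r t) (h.removeNth u)) (u h) := by
  refine Fintype.sum_equiv ρ _ _ (fun h => ?_)
  obtain ⟨π, hπ⟩ := key_perm ρ h
  have hrm : h.removeNth (u ∘ ρ) = ((ρ h).removeNth u) ∘ π := by
    funext j
    simp [Fin.removeNth, hπ j]
  rw [hrm, Function.comp_apply]
  congr 2
  rw [lastTwoCurry_spencerD, lastTwoCurry_spencerD, lastTwoCurry_comp_perm ht π]


/-- `P` is a left inverse of `δ` on `Hom(V, 𝔤)`. -/
lemma P_delta (g : Submodule ℝ (V →ₗ[ℝ] V)) (W : Submodule ℝ (V →ₗ[ℝ] V →ₗ[ℝ] V))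
    (hsplit : ∀ T : V →ₗ[ℝ] V →ₗ[ℝ] V, (∀ v : V, T v v = 0) →
      ∃! q : (V →ₗ[ℝ] (V →ₗ[ℝ] V)) × (V →ₗ[ℝ] V →ₗ[ℝ] V),
        (∀ u : V, q.1 u ∈ g) ∧ q.2 ∈ W ∧ T = (q.1 - q.1.flip) + q.2)
    (P : (V →ₗ[ℝ] V →ₗ[ℝ] V) →ₗ[ℝ] (V →ₗ[ℝ] V →ₗ[ℝ] V))
    (hPg : ∀ (T : V →ₗ[ℝ] V →ₗ[ℝ] V) (u : V), P T u ∈ g)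
    (hPW : ∀ T : V →ₗ[ℝ] V →ₗ[ℝ] V, (∀ v : V, T v v = 0) →
      T - (P T - (P T).flip) ∈ W)
    (σ : V →ₗ[ℝ] (V →ₗ[ℝ] V)) (hσ : ∀ u : V, σ u ∈ g) :
    P (σ - σ.flip) = σ := by
  set T : V →ₗ[ℝ] V →ₗ[ℝ] V := σ - σ.flip with hT
  have halt : ∀ v : V, T v v = 0 := by intro v; simp [hT]
  obtain ⟨q, _, huniq⟩ := hsplit T halt
  have h1 : (σ, (0 : V →ₗ[ℝ] V →ₗ[ℝ] V)) = q :=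
    huniq _ ⟨hσ, W.zero_mem, by rw [add_zero]⟩
  have h2 : (P T, T - (P T - (P T).flip)) = q :=
    huniq _ ⟨fun u => hPg T u, hPW T halt, (by intro A B; abel : ∀ A B : V →ₗ[ℝ] V →ₗ[ℝ] V, B = A + (B - A)) _ T⟩
  have := h1.trans h2.symm
  exact (congrArg Prod.fst this).symm

lemma lastTwoCurry_mem (g : Submodule ℝ (V →ₗ[ℝ] V))
    {t : MultilinearMap ℝ (fun _ : Fin (r + 2) => V) V}
    (htg : ∀ u : Fin (r + 1) → V, t.curryRight u ∈ g) (x : Fin r → V) (v : V) :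
    lastTwoCurry t x v ∈ g := by
  rw [lastTwoCurry_apply_one]; exact htg _

/-- Key computation: on `D(E_𝔤)`, each `Θ`-term recovers `t`. -/
lemma theta_term_of_g (g : Submodule ℝ (V →ₗ[ℝ] V)) (W : Submodule ℝ (V →ₗ[ℝ] V →ₗ[ℝ] V))
    (hsplit : ∀ T : V →ₗ[ℝ] V →ₗ[ℝ] V, (∀ v : V, T v v = 0) →
      ∃! q : (V →ₗ[ℝ] (V →ₗ[ℝ] V)) × (V →ₗ[ℝ] V →ₗ[ℝ] V),
        (∀ u : V, q.1 u ∈ g) ∧ q.2 ∈ W ∧ T = (q.1 - q.1.flip) + q.2)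
    (P : (V →ₗ[ℝ] V →ₗ[ℝ] V) →ₗ[ℝ] (V →ₗ[ℝ] V →ₗ[ℝ] V))
    (hPg : ∀ (T : V →ₗ[ℝ] V →ₗ[ℝ] V) (u : V), P T u ∈ g)
    (hPW : ∀ T : V →ₗ[ℝ] V →ₗ[ℝ] V, (∀ v : V, T v v = 0) →
      T - (P T - (P T).flip) ∈ W)
    {t : MultilinearMap ℝ (fun _ : Fin (r + 2) => V) V}
    (ht : SymFirst r t) (htg : ∀ u : Fin (r + 1) → V, t.curryRight u ∈ g)
    (u : Fin (r + 1) → V) (h : Fin (r + 1)) :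
    P (lastTwoCurry (spencerD r t) (h.removeNth u)) (u h) = t.curryRight u := by
  rw [lastTwoCurry_spencerD,
    P_delta g W hsplit P hPg hPW (lastTwoCurry t (h.removeNth u))
      (fun v => lastTwoCurry_mem g htg _ v)]
  ext w
  rw [lastTwoCurry_apply, MultilinearMap.curryRight_apply]
  have key := symFirst_apply ht (liftPerm (rho h)) (liftPerm_last _) (snoc u w)
  have harg : (fun i => (snoc u w : Fin (r + 2) → V) (liftPerm (rho h) i))
      = snoc (snoc (h.removeNth u) (u h)) w := by
    funext i
    refine Fin.lastCases ?_ (fun j => ?_) i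
    · simp
    · refine Fin.lastCases ?_ (fun k => ?_) j
      · simp
      · simp [Fin.removeNth]
  rw [harg] at key
  exact key


lemma snoc_comp_liftRho (u : Fin (r + 1) → V) (w : V) (h : Fin (r + 1)) :
    (fun i => (snoc u w : Fin (r + 2) → V) (liftPerm (rho h) i))
      = snoc (snoc (h.removeNth u) (u h)) w := by
  funext i
  refine Fin.lastCases ?_ (fun j => ?_) i
  · simp
  · refine Fin.lastCases ?_ (fun k => ?_) j
    · simp
    · simp [Fin.removeNth]

/-- The basic multilinear map `m ↦ P(s(m₁,…,m_r,·,·))(m_{r+1})(m_{r+2})`. -/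
noncomputable def Bmap (P : (V →ₗ[ℝ] V →ₗ[ℝ] V) →ₗ[ℝ] (V →ₗ[ℝ] V →ₗ[ℝ] V))
    (s : MultilinearMap ℝ (fun _ : Fin (r + 2) => V) V) :
    MultilinearMap ℝ (fun _ : Fin (r + 2) => V) V :=
  ((P.compMultilinearMap (s.curryRight.curryRight)).uncurryRight).uncurryRight

lemma Bmap_apply_snoc (P : (V →ₗ[ℝ] V →ₗ[ℝ] V) →ₗ[ℝ] (V →ₗ[ℝ] V →ₗ[ℝ] V))
    (s : MultilinearMap ℝ (fun _ : Fin (r + 2) => V) V) (x : Fin r → V) (a b : V) :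
    Bmap P s (snoc (snoc x a) b) = P (lastTwoCurry s x) a b := by
  simp [Bmap, MultilinearMap.uncurryRight_apply, Fin.init_snoc, Fin.snoc_last, lastTwoCurry]

/-- The canonical element `t₁ ∈ E_𝔤` with `Θ(D t₁) = Θ(s)`. -/
noncomputable def tOne (P : (V →ₗ[ℝ] V →ₗ[ℝ] V) →ₗ[ℝ] (V →ₗ[ℝ] V →ₗ[ℝ] V))
    (s : MultilinearMap ℝ (fun _ : Fin (r + 2) => V) V) :
    MultilinearMap ℝ (fun _ : Fin (r + 2) => V) V :=
  ((r : ℝ) + 1)⁻¹ • ∑ h : Fin (r + 1), (Bmap P s).domDomCongr (liftPerm (rho h))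

lemma tOne_apply_snoc (P : (V →ₗ[ℝ] V →ₗ[ℝ] V) →ₗ[ℝ] (V →ₗ[ℝ] V →ₗ[ℝ] V))
    (s : MultilinearMap ℝ (fun _ : Fin (r + 2) => V) V) (u : Fin (r + 1) → V) (w : V) :
    tOne P s (snoc u w)
      = ((r : ℝ) + 1)⁻¹ • ((∑ h : Fin (r + 1), P (lastTwoCurry s (h.removeNth u)) (u h)) w) := by
  rw [tOne, MultilinearMap.smul_apply, MultilinearMap.sum_apply, LinearMap.sum_apply]
  congr 1
  refine Finset.sum_congr rfl (fun h _ => ?_)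
  rw [MultilinearMap.domDomCongr_apply, snoc_comp_liftRho, Bmap_apply_snoc]

lemma tOne_curryRight (P : (V →ₗ[ℝ] V →ₗ[ℝ] V) →ₗ[ℝ] (V →ₗ[ℝ] V →ₗ[ℝ] V))
    (s : MultilinearMap ℝ (fun _ : Fin (r + 2) => V) V) (u : Fin (r + 1) → V) :
    (tOne P s).curryRight u
      = ((r : ℝ) + 1)⁻¹ • ∑ h : Fin (r + 1), P (lastTwoCurry s (h.removeNth u)) (u h) := by
  ext w
  rw [MultilinearMap.curryRight_apply, tOne_apply_snoc, LinearMap.smul_apply]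

lemma tOne_curryRight_mem (g : Submodule ℝ (V →ₗ[ℝ] V))
    (P : (V →ₗ[ℝ] V →ₗ[ℝ] V) →ₗ[ℝ] (V →ₗ[ℝ] V →ₗ[ℝ] V))
    (hPg : ∀ (T : V →ₗ[ℝ] V →ₗ[ℝ] V) (u : V), P T u ∈ g)
    (s : MultilinearMap ℝ (fun _ : Fin (r + 2) => V) V) (u : Fin (r + 1) → V) :
    (tOne P s).curryRight u ∈ g := by
  rw [tOne_curryRight]
  exact Submodule.smul_mem _ _ (Submodule.sum_mem _ (fun h _ => hPg _ _))

/-- Descend a permutation of `Fin (n+1)` fixing `last n` to `Fin n`. -/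
lemma exists_descend {n : ℕ} (σ : Equiv.Perm (Fin (n + 1))) (hσ : σ (last n) = last n) :
    ∃ ρ : Equiv.Perm (Fin n), ∀ j, σ (castSucc j) = castSucc (ρ j) := by
  set e : Option (Fin n) ≃ Option (Fin n) :=
    finSuccEquivLast.symm.trans (σ.trans finSuccEquivLast) with he
  refine ⟨e.removeNone, fun j => ?_⟩
  have hne : σ (castSucc j) ≠ last n := by
    intro hc
    exact absurd (σ.injective (hc.trans hσ.symm)) (Fin.ne_last_of_lt (Fin.castSucc_lt_last j))
  obtain ⟨k, hk⟩ := Fin.exists_castSucc_eq.mpr hne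
  have hek : e (some j) = some k := by
    simp only [he, Equiv.trans_apply, finSuccEquivLast_symm_some, ← hk, finSuccEquivLast_castSucc]
  have h2 := Equiv.removeNone_some e ⟨k, hek⟩
  rw [hek] at h2
  have h3 : e.removeNone j = k := Option.some_injective _ h2
  rw [h3, hk]

lemma symFirst_tOne (P : (V →ₗ[ℝ] V →ₗ[ℝ] V) →ₗ[ℝ] (V →ₗ[ℝ] V →ₗ[ℝ] V))
    {t : MultilinearMap ℝ (fun _ : Fin (r + 2) => V) V} (ht : SymFirst r t) :
    SymFirst r (tOne P (spencerD r t)) := by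
  intro σ hσ
  ext v
  rw [MultilinearMap.domDomCongr_apply]
  obtain ⟨ρ, hρ⟩ := exists_descend σ hσ
  have hv1 : (fun i => v (σ i)) = snoc ((init v) ∘ ρ) (v (last (r + 1))) := by
    funext i
    refine Fin.lastCases ?_ (fun j => ?_) i
    · rw [hσ]; simp
    · rw [hρ j]; simp [Fin.init]
  conv_rhs => rw [← Fin.snoc_init_self v]
  rw [hv1, tOne_apply_snoc, tOne_apply_snoc]
  congr 1
  exact LinearMap.congr_fun (theta_sum_perm P ht ρ (init v)) (v (last (r + 1)))


lemma spencerD_sub (a b : MultilinearMap ℝ (fun _ : Fin (r + 2) => V) V) :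
    spencerD r (a - b) = spencerD r a - spencerD r b := by
  ext m
  simp only [spencerD, MultilinearMap.sub_apply, MultilinearMap.domDomCongr_apply]
  abel

lemma symFirst_sub {a b : MultilinearMap ℝ (fun _ : Fin (r + 2) => V) V}
    (ha : SymFirst r a) (hb : SymFirst r b) : SymFirst r (a - b) := by
  intro σ hσ
  ext m
  simp only [MultilinearMap.domDomCongr_apply, MultilinearMap.sub_apply]
  rw [symFirst_apply ha σ hσ, symFirst_apply hb σ hσ]

lemma curryRight_sub (a b : MultilinearMap ℝ (fun _ : Fin (r + 2) => V) V)
    (u : Fin (r + 1) → V) :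
    (a - b).curryRight u = a.curryRight u - b.curryRight u := by
  ext w
  simp [MultilinearMap.curryRight_apply]

lemma eq_zero_of_snoc (d : MultilinearMap ℝ (fun _ : Fin (r + 2) => V) V)
    (hd : ∀ (u : Fin (r + 1) → V) (w : V), d (snoc u w) = 0) : d = 0 := by
  ext m
  rw [← Fin.snoc_init_self m]
  simpa using hd (init m) (m (last (r + 1)))

lemma theta_sub_split (P : (V →ₗ[ℝ] V →ₗ[ℝ] V) →ₗ[ℝ] (V →ₗ[ℝ] V →ₗ[ℝ] V))
    (a b : MultilinearMap ℝ (fun _ : Fin (r + 2) => V) V) (u : Fin (r + 1) → V) (w : V) :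
    ∑ h : Fin (r + 1), P (lastTwoCurry (a - b) (h.removeNth u)) (u h) w
      = ∑ h : Fin (r + 1), P (lastTwoCurry a (h.removeNth u)) (u h) w
        - ∑ h : Fin (r + 1), P (lastTwoCurry b (h.removeNth u)) (u h) w := by
  rw [← Finset.sum_sub_distrib]
  refine Finset.sum_congr rfl (fun h _ => ?_)
  have hsub : lastTwoCurry (a - b) (h.removeNth u) =
      lastTwoCurry a (h.removeNth u) - lastTwoCurry b (h.removeNth u) := by
    ext v w'
    simp [MultilinearMap.sub_apply]
  rw [hsub, map_sub, LinearMap.sub_apply, LinearMap.sub_apply]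

lemma spencerD_zero : spencerD r (0 : MultilinearMap ℝ (fun _ : Fin (r + 2) => V) V) = 0 := by
  ext m
  simp [spencerD]

end SpencerAux

open SpencerAux in
/-- Let `𝔤 ⊆ End(V)` have vanishing first prolongation, let
`A²(V;V) = δ(Hom(V,𝔤)) ⊕ W`, and let `P` be the unique linear projection onto the
`Hom(V,𝔤)`-component (`T − δ(P T) ∈ W` for every alternating `T`, where `δτ = τ − τᶠˡⁱᵖ`).
Let `E` be the space of multilinear maps `V^{r+2} → V` symmetric in the first `r+1`
arguments, `D` the Spencer operator, `E_𝔤 ⊆ E` those `t` with `t(u₁,…,u_{r+1},·) ∈ 𝔤`, and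
`Θ(s)(u₁,…,u_{r+1},w) = Σ_h P(s(u₁,…,û_h,…,u_{r+1},·,·))(u_h)(w)` on `D(E)`.  Then `D(E)`
is the internal direct sum of `D(E_𝔤)` and `ker Θ ∩ D(E)`. -/
theorem spencer_image_direct_sum
    {V : Type*} [AddCommGroup V] [Module ℝ V] [FiniteDimensional ℝ V]
    (g : Submodule ℝ (V →ₗ[ℝ] V))
    -- the first prolongation of `𝔤` vanishes, i.e. `δ` is injective on `Hom(V,𝔤)`:
    (hprol : ∀ τ : V →ₗ[ℝ] (V →ₗ[ℝ] V),
      (∀ u : V, τ u ∈ g) → (∀ u v : V, τ u v = τ v u) → τ = 0)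
    (W : Submodule ℝ (V →ₗ[ℝ] V →ₗ[ℝ] V))
    (hWalt : ∀ T ∈ W, ∀ v : V, T v v = 0)
    -- `A²(V;V) = δ(Hom(V,𝔤)) ⊕ W`:
    (hsplit : ∀ T : V →ₗ[ℝ] V →ₗ[ℝ] V, (∀ v : V, T v v = 0) →
      ∃! q : (V →ₗ[ℝ] (V →ₗ[ℝ] V)) × (V →ₗ[ℝ] V →ₗ[ℝ] V),
        (∀ u : V, q.1 u ∈ g) ∧ q.2 ∈ W ∧ T = (q.1 - q.1.flip) + q.2)
    -- `P` is the associated linear projection `A²(V;V) → Hom(V,𝔤)`: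
    (P : (V →ₗ[ℝ] V →ₗ[ℝ] V) →ₗ[ℝ] (V →ₗ[ℝ] V →ₗ[ℝ] V))
    (hPg : ∀ (T : V →ₗ[ℝ] V →ₗ[ℝ] V) (u : V), P T u ∈ g)
    (hPW : ∀ T : V →ₗ[ℝ] V →ₗ[ℝ] V, (∀ v : V, T v v = 0) →
      T - (P T - (P T).flip) ∈ W)
    (r : ℕ) :
    ∀ s : MultilinearMap ℝ (fun _ : Fin (r + 2) => V) V,
      (∃ t, SymFirst r t ∧ spencerD r t = s) →
      ∃! q : (MultilinearMap ℝ (fun _ : Fin (r + 2) => V) V) ×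
              (MultilinearMap ℝ (fun _ : Fin (r + 2) => V) V),
        -- `q.1 ∈ D(E_𝔤)`:
        (∃ t₁, SymFirst r t₁ ∧ (∀ u : Fin (r + 1) → V, t₁.curryRight u ∈ g) ∧
          spencerD r t₁ = q.1) ∧
        -- `q.2 ∈ D(E)`:
        (∃ t₂, SymFirst r t₂ ∧ spencerD r t₂ = q.2) ∧
        -- `Θ(q.2) = 0`:
        (∀ (u : Fin (r + 1) → V) (w : V),
          ∑ h : Fin (r + 1), P (lastTwoCurry q.2 (h.removeNth u)) (u h) w = 0) ∧
        s = q.1 + q.2 := by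
  rintro s ⟨t, ht, rfl⟩
  set t₁ := tOne P (spencerD r t) with ht₁def
  have hsym1 : SymFirst r t₁ := symFirst_tOne P ht
  have hmem : ∀ u : Fin (r + 1) → V, t₁.curryRight u ∈ g :=
    fun u => tOne_curryRight_mem g P hPg _ u
  have hrne : ((r : ℝ) + 1) ≠ 0 := by positivity
  -- key computation for any `d ∈ E_𝔤`
  have hkey : ∀ d : MultilinearMap ℝ (fun _ : Fin (r + 2) => V) V, SymFirst r d →
      (∀ u : Fin (r + 1) → V, d.curryRight u ∈ g) →
      ∀ (u : Fin (r + 1) → V) (w : V),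
        ∑ h : Fin (r + 1), P (lastTwoCurry (spencerD r d) (h.removeNth u)) (u h) w
          = (r + 1 : ℕ) • d (snoc u w) := by
    intro d hd hdg u w
    have : ∀ h : Fin (r + 1),
        P (lastTwoCurry (spencerD r d) (h.removeNth u)) (u h) w = d (snoc u w) := by
      intro h
      rw [theta_term_of_g g W hsplit P hPg hPW hd hdg u h, MultilinearMap.curryRight_apply]
    rw [Finset.sum_congr rfl (fun h _ => this h), Finset.sum_const, Finset.card_univ,
      Fintype.card_fin]
  -- `Θ(D t₁) = Θ(D t)`
  have hDtheta : ∀ (u : Fin (r + 1) → V) (w : V),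
      ∑ h : Fin (r + 1), P (lastTwoCurry (spencerD r t₁) (h.removeNth u)) (u h) w
        = ∑ h : Fin (r + 1), P (lastTwoCurry (spencerD r t) (h.removeNth u)) (u h) w := by
    intro u w
    rw [hkey t₁ hsym1 hmem u w, ht₁def, tOne_apply_snoc, ← Nat.cast_smul_eq_nsmul ℝ,
      smul_smul, LinearMap.sum_apply]
    push_cast
    rw [mul_inv_cancel₀ hrne, one_smul]
  have hthetazero : ∀ (u : Fin (r + 1) → V) (w : V),
      ∑ h : Fin (r + 1),
        P (lastTwoCurry (spencerD r t - spencerD r t₁) (h.removeNth u)) (u h) w = 0 := by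
    intro u w
    rw [theta_sub_split, hDtheta u w, sub_self]
  refine ⟨(spencerD r t₁, spencerD r t - spencerD r t₁),
    ⟨⟨t₁, hsym1, hmem, rfl⟩,
     ⟨t - t₁, symFirst_sub ht hsym1, spencerD_sub t t₁⟩,
     hthetazero, by rw [← add_sub_assoc, add_sub_cancel_left]⟩, ?_⟩
  rintro ⟨y1, y2⟩ ⟨⟨ta, htasym, htag, rfl⟩, -, htheta', hsum⟩
  have hy2 : y2 = spencerD r t - spencerD r ta := eq_sub_of_add_eq' hsum.symm
  have hdsym : SymFirst r (ta - t₁) := symFirst_sub htasym hsym1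
  have hdg : ∀ u : Fin (r + 1) → V, (ta - t₁).curryRight u ∈ g := by
    intro u
    rw [curryRight_sub]
    exact Submodule.sub_mem _ (htag u) (hmem u)
  have hDd : spencerD r (ta - t₁)
      = (spencerD r t - spencerD r t₁) - (spencerD r t - spencerD r ta) := by
    rw [spencerD_sub]; abel
  have hdzero : ta - t₁ = 0 := by
    refine eq_zero_of_snoc _ (fun u w => ?_)
    have h1 := hkey (ta - t₁) hdsym hdg u w
    rw [hDd, theta_sub_split, hthetazero u w, ← hy2, htheta' u w, sub_self] at h1
    have h2 : ((r + 1 : ℕ) : ℝ) • (ta - t₁) (snoc u w) = 0 := by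
      rw [Nat.cast_smul_eq_nsmul, ← h1]
    rcases smul_eq_zero.mp h2 with hc | hc
    · exact absurd hc (by push_cast; exact hrne)
    · exact hc
  have hta : spencerD r ta = spencerD r t₁ := by
    have h0 : spencerD r ta - spencerD r t₁ = 0 := by
      rw [← spencerD_sub, hdzero, spencerD_zero]
    exact sub_eq_zero.mp h0
  simp only [Prod.mk.injEq]
  exact ⟨hta, by rw [hy2, hta]⟩
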